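/- On the invariant interval [b, c), the restricted plCNV map is affinely conjugate to a β-transformation: if g(x) = (1+m₁)x − m₁ a − α − β H(x−d) on [b,c) (with b, c as above, b < d < c, and all of [b,c] ⊆ [J_min, J_max]), then the map h(y) = (g(b + (c−b)y) − b)/(c−b) on [0,1) has the form h(y) = β̃ y + α̃ (mod 1)-type piecewise affine map with slope β̃ = 1 + m₁ on both branches and a single discontinuity at (d−b)/(c−b). -/
import Mathlib


/-- On the invariant interval `[b,c)` the restricted plCNV map is affinely conjugate
to a piecewise affine map of `[0,1)` with slope `1 + m₁` on both branches and a single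
discontinuity at `(d-b)/(c-b)`, the left branch tending to `1` there and the right
branch taking value `0` there. -/
theorem plCNV_conjugate_to_betaTransformation (m0 m1 a α β d b c : ℝ)
    (hm0 : 0 < m0) (hm1 : 0 < m1) (ha0 : 0 < a) (ha1 : a < 1)
    (hb : b = d + m1 * (d - a) - α - β) (hc : c = d + m1 * (d - a) - α)
    (hbd : b < d) (hdc : d < c)
    (hJmin : a * m1 / (m0 + m1) ≤ b) (hJmax : c ≤ (m0 + a * m1) / (m0 + m1))
    (hinv : Set.MapsTo
      (fun x : ℝ => (1 + m1) * x - m1 * a - α - β * (if d ≤ x then 1 else 0))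
      (Set.Ico b c) (Set.Ico b c)) :
    ∃ α₁ α₂ : ℝ,
      (∀ y ∈ Set.Ico (0:ℝ) 1,
        ((fun x : ℝ => (1 + m1) * x - m1 * a - α - β * (if d ≤ x then 1 else 0))
            (b + (c - b) * y) - b) / (c - b)
          = if y < (d - b) / (c - b) then (1 + m1) * y + α₁ else (1 + m1) * y + α₂) ∧
      (1 + m1) * ((d - b) / (c - b)) + α₁ = 1 ∧
      (1 + m1) * ((d - b) / (c - b)) + α₂ = 0 := by
  have hcb : c - b = β := by rw [hb, hc]; ring
  have hpos : 0 < c - b := sub_pos.2 (hbd.trans hdc)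
  have hne : c - b ≠ 0 := ne_of_gt hpos
  refine ⟨(m1 * b - m1 * a - α) / (c - b), (m1 * b - m1 * a - α) / (c - b) - 1, ?_, ?_, ?_⟩
  · intro y _
    simp only
    have hiff : d ≤ b + (c - b) * y ↔ (d - b) / (c - b) ≤ y := by
      rw [div_le_iff₀ hpos]
      constructor <;> intro h <;> nlinarith
    by_cases h : y < (d - b) / (c - b)
    · rw [if_neg (by rw [hiff]; exact not_le.2 h), if_pos h]
      field_simp
      ring
    · rw [if_pos (hiff.2 (not_lt.1 h)), if_neg h]
      rw [← hcb]
      field_simp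
      ring
  · have : (1 + m1) * (d - b) + (m1 * b - m1 * a - α) = c - b := by
      rw [hc]; ring
    field_simp
    linarith [this]
  · have : (1 + m1) * (d - b) + (m1 * b - m1 * a - α) = c - b := by
      rw [hc]; ring
    field_simp
    linarith [this]
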